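/- Under the IRM with ML proxies and square-integrability, the covariance of the doubly robust label with the proxy treatment-effect score decomposes as Cov(c(η̃), θ̃(Z)) = Cov(θ(Z), θ̃(Z)) + Cov(bias₁, θ̃(Z)) + Cov(bias₂, θ̃(Z)). -/

import Mathlib

open MeasureTheory ProbabilityTheory

private lemma l2_mul_integrable' {Ω : Type*} [MeasurableSpace Ω] {P : Measure Ω}
    {f g : Ω → ℝ} (hf : MemLp f 2 P) (hg : MemLp g 2 P) :
    Integrable (fun ω => f ω * g ω) P := by
  have h := MemLp.smul (r := 1) hg hf
  rw [memLp_one_iff_integrable] at h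
  exact h.congr (Filter.Eventually.of_forall fun ω => by simp [smul_eq_mul])

private lemma l2_bdd_mul' {Ω : Type*} [MeasurableSpace Ω] {P : Measure Ω}
    {f g : Ω → ℝ} {C : ℝ} (hg : MemLp g 2 P)
    (hf : AEStronglyMeasurable f P)
    (hbd : ∀ᵐ ω ∂P, ‖f ω‖ ≤ C) :
    MemLp (fun ω => f ω * g ω) 2 P := by
  refine MemLp.of_le_mul (c := C) hg (hf.mul hg.1) ?_
  filter_upwards [hbd] with ω h
  rw [norm_mul]
  exact mul_le_mul_of_nonneg_right h (norm_nonneg _)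

theorem covariance_doubly_robust_label_decomposition
    {Ω : Type*} [MeasurableSpace Ω] (P : Measure Ω) [IsProbabilityMeasure P]
    {𝓩 : Type*} [MeasurableSpace 𝓩]
    (Y T : Ω → ℝ) (Z : Ω → 𝓩)
    (hYm : Measurable Y) (hTm : Measurable T) (hZm : Measurable Z)
    (hTbin : ∀ ω, T ω = 0 ∨ T ω = 1)
    (g0 g1 p : 𝓩 → ℝ) (hg0m : Measurable g0) (hg1m : Measurable g1) (hpm : Measurable p)
    (hU : MeasureTheory.condExp
        (MeasurableSpace.comap (fun ω => (T ω, Z ω)) inferInstance) P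
        (fun ω => Y ω - (if T ω = 1 then g1 (Z ω) else g0 (Z ω))) =ᵐ[P] 0)
    (hprop : (fun ω => p (Z ω)) =ᵐ[P]
        MeasureTheory.condExp (MeasurableSpace.comap Z inferInstance) P T)
    (hpbd : ∀ᵐ ω ∂P, 0 < p (Z ω) ∧ p (Z ω) < 1)
    (gt0 gt1 pt : 𝓩 → ℝ)
    (hgt0m : Measurable gt0) (hgt1m : Measurable gt1) (hptm : Measurable pt)
    (ε : ℝ) (hε0 : 0 < ε) (hε1 : ε < 1 / 2)
    (hptbd : ∀ᵐ ω ∂P, ε ≤ pt (Z ω) ∧ pt (Z ω) ≤ 1 - ε)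
    (θ : Ω → ℝ) (hθ : θ = fun ω => g1 (Z ω) - g0 (Z ω))
    (θt : Ω → ℝ) (hθt : θt = fun ω => gt1 (Z ω) - gt0 (Z ω))
    (Ht : Ω → ℝ) (hHt : Ht = fun ω => T ω / pt (Z ω) - (1 - T ω) / (1 - pt (Z ω)))
    (c : Ω → ℝ)
    (hc : c = fun ω => gt1 (Z ω) - gt0 (Z ω) +
      Ht ω * (Y ω - (if T ω = 1 then gt1 (Z ω) else gt0 (Z ω))))
    (bias1 bias2 : Ω → ℝ)
    (hbias1 : bias1 = fun ω => (p (Z ω) / pt (Z ω) - 1) * (g1 (Z ω) - gt1 (Z ω)))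
    (hbias2 : bias2 = fun ω =>
      (1 - (1 - p (Z ω)) / (1 - pt (Z ω))) * (g0 (Z ω) - gt0 (Z ω)))
    (cov : (Ω → ℝ) → (Ω → ℝ) → ℝ)
    (hcov : ∀ f g : Ω → ℝ, cov f g =
      ∫ ω, (f ω - ∫ m, f m ∂P) * (g ω - ∫ m, g m ∂P) ∂P)
    (hY2 : MemLp Y 2 P)
    (hg02 : MemLp (fun ω => g0 (Z ω)) 2 P) (hg12 : MemLp (fun ω => g1 (Z ω)) 2 P)
    (hgt02 : MemLp (fun ω => gt0 (Z ω)) 2 P) (hgt12 : MemLp (fun ω => gt1 (Z ω)) 2 P)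
    :
    cov c θt = cov θ θt + cov bias1 θt + cov bias2 θt := by
  -- σ-algebras
  have hTZmeas : Measurable fun ω => (T ω, Z ω) := hTm.prodMk hZm
  have hmZ : MeasurableSpace.comap Z inferInstance ≤ ‹MeasurableSpace Ω› := hZm.comap_le
  have hmTZ : MeasurableSpace.comap (fun ω => (T ω, Z ω)) inferInstance
      ≤ ‹MeasurableSpace Ω› := hTZmeas.comap_le
  haveI : SigmaFinite (P.trim hmZ) := inferInstance
  haveI : SigmaFinite (P.trim hmTZ) := inferInstance
  -- basic bounds
  have hT01 : ∀ ω, 0 ≤ T ω ∧ T ω ≤ 1 := by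
    intro ω; rcases hTbin ω with h | h <;> rw [h] <;> norm_num
  -- auxiliary functions
  set U := fun ω => Y ω - (if T ω = 1 then g1 (Z ω) else g0 (Z ω)) with hUdef
  set I := ∫ m, θt m ∂P with hIdef
  set s := fun ω => θt ω - I with hsdef
  set ψ := fun ω =>
    (g1 (Z ω) - gt1 (Z ω)) / pt (Z ω) + (g0 (Z ω) - gt0 (Z ω)) / (1 - pt (Z ω)) with hψdef
  set W := fun ω => Ht ω * s ω with hWdef
  set φ := fun ω => ψ ω * s ω with hφdef
  -- measurability
  have hT1 : MeasurableSet {ω | T ω = 1} := hTm (measurableSet_singleton 1)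
  have hHtm : Measurable Ht := by
    rw [hHt]
    exact (hTm.div (hptm.comp hZm)).sub ((measurable_const.sub hTm).div
      (measurable_const.sub (hptm.comp hZm)))
  -- L² memberships
  have hθt2 : MemLp θt 2 P := by rw [hθt]; exact hgt12.sub hgt02
  have hθ2 : MemLp θ 2 P := by rw [hθ]; exact hg12.sub hg02
  have hs2 : MemLp s 2 P := hθt2.sub (memLp_const I)
  have hs_int : Integrable s P := hs2.integrable one_le_two
  have hite2 : ∀ (a b : 𝓩 → ℝ), Measurable a → Measurable b →
      MemLp (fun ω => a (Z ω)) 2 P → MemLp (fun ω => b (Z ω)) 2 P →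
      MemLp (fun ω => (if T ω = 1 then a (Z ω) else b (Z ω))) 2 P := by
    intro a b ham hbm ha2 hb2
    refine MemLp.of_le (ha2.norm.add hb2.norm)
      (Measurable.ite hT1 (ham.comp hZm) (hbm.comp hZm)).aestronglyMeasurable
      (Filter.Eventually.of_forall fun ω => ?_)
    have h0 : (0:ℝ) ≤ ‖a (Z ω)‖ + ‖b (Z ω)‖ := by positivity
    simp only [Pi.add_apply, Pi.sub_apply]
    rw [Real.norm_eq_abs (‖a (Z ω)‖ + ‖b (Z ω)‖), abs_of_nonneg h0]
    by_cases h : T ω = 1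
    · simpa [h] using le_add_of_nonneg_right (norm_nonneg (b (Z ω)))
    · simpa [h] using le_add_of_nonneg_left (norm_nonneg (a (Z ω)))
  have hgT2 : MemLp (fun ω => (if T ω = 1 then g1 (Z ω) else g0 (Z ω))) 2 P :=
    hite2 g1 g0 hg1m hg0m hg12 hg02
  have hgtT2 : MemLp (fun ω => (if T ω = 1 then gt1 (Z ω) else gt0 (Z ω))) 2 P :=
    hite2 gt1 gt0 hgt1m hgt0m hgt12 hgt02
  have hU2 : MemLp U 2 P := hY2.sub hgT2
  have hUint : Integrable U P := hU2.integrable one_le_two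
  -- bound on Ht
  have hHt_bd : ∀ᵐ ω ∂P, ‖Ht ω‖ ≤ 1/ε + 1/ε := by
    filter_upwards [hptbd] with ω h
    have h1 : ε ≤ 1 - pt (Z ω) := by linarith [h.2]
    have hT := hT01 ω
    simp only [hHt]
    refine (norm_sub_le _ _).trans (add_le_add ?_ ?_)
    · rw [Real.norm_eq_abs, abs_of_nonneg (div_nonneg hT.1 (by linarith [h.1]))]
      exact div_le_div₀ (by norm_num) hT.2 hε0 h.1
    · rw [Real.norm_eq_abs, abs_of_nonneg (div_nonneg (by linarith [hT.2]) (by linarith))]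
      exact div_le_div₀ (by norm_num) (by linarith [hT.1]) hε0 h1
  have hW2 : MemLp W 2 P := by
    rw [hWdef]; exact l2_bdd_mul' hs2 hHtm.aestronglyMeasurable hHt_bd
  -- ψ is in L²
  have hψm : Measurable ψ := by
    rw [hψdef]
    exact (((hg1m.comp hZm).sub (hgt1m.comp hZm)).div (hptm.comp hZm)).add
      (((hg0m.comp hZm).sub (hgt0m.comp hZm)).div (measurable_const.sub (hptm.comp hZm)))
  have hψ2 : MemLp ψ 2 P := by
    refine MemLp.of_le_mul (c := 1/ε) ((hg12.sub hgt12).norm.add ((hg02.sub hgt02).norm))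
      hψm.aestronglyMeasurable ?_
    filter_upwards [hptbd] with ω h
    have h1 : ε ≤ 1 - pt (Z ω) := by linarith [h.2]
    have hpt0 : 0 < pt (Z ω) := lt_of_lt_of_le hε0 h.1
    have h1pt0 : 0 < 1 - pt (Z ω) := lt_of_lt_of_le hε0 h1
    have hnn : (0:ℝ) ≤ ‖g1 (Z ω) - gt1 (Z ω)‖ + ‖g0 (Z ω) - gt0 (Z ω)‖ := by positivity
    simp only [Pi.add_apply, Pi.sub_apply]
    rw [Real.norm_eq_abs (‖g1 (Z ω) - gt1 (Z ω)‖ + ‖g0 (Z ω) - gt0 (Z ω)‖),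
      abs_of_nonneg hnn, mul_add, hψdef]
    refine (norm_add_le _ _).trans (add_le_add ?_ ?_)
    · rw [norm_div, Real.norm_eq_abs (pt (Z ω)), abs_of_pos hpt0, one_div, inv_mul_eq_div]
      exact div_le_div₀ (norm_nonneg _) le_rfl hε0 h.1
    · rw [norm_div, Real.norm_eq_abs (1 - pt (Z ω)), abs_of_pos h1pt0, one_div, inv_mul_eq_div]
      exact div_le_div₀ (norm_nonneg _) le_rfl hε0 h1
  have hφ_int : Integrable φ P := by
    rw [hφdef]; exact l2_mul_integrable' hψ2 hs2
  -- integrability of products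
  have hWU : Integrable (fun ω => W ω * U ω) P := l2_mul_integrable' hW2 hU2
  have hTint : Integrable T P := by
    refine Integrable.mono' (integrable_const 1) hTm.aestronglyMeasurable
      (Filter.Eventually.of_forall fun ω => ?_)
    rw [Real.norm_eq_abs, abs_of_nonneg (hT01 ω).1]; exact (hT01 ω).2
  have hφT : Integrable (fun ω => φ ω * T ω) P := by
    have h := Integrable.bdd_mul (c := 1) hφ_int hTm.aestronglyMeasurable
      (Filter.Eventually.of_forall fun ω => by
        rw [Real.norm_eq_abs, abs_of_nonneg (hT01 ω).1]; exact (hT01 ω).2)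
    exact h.congr (Filter.Eventually.of_forall fun ω => mul_comm _ _)
  have hφp : Integrable (fun ω => φ ω * p (Z ω)) P := by
    have h := Integrable.bdd_mul (c := 1) hφ_int (show AEStronglyMeasurable (fun ω => p (Z ω)) P from (hpm.comp hZm).aestronglyMeasurable)
      (by filter_upwards [hpbd] with ω h
          rw [Real.norm_eq_abs, abs_of_pos h.1]; exact h.2.le)
    exact h.congr (Filter.Eventually.of_forall fun ω => mul_comm _ _)
  have hφTp : Integrable (fun ω => φ ω * (T ω - p (Z ω))) P := by
    have h : Integrable (fun ω => φ ω * T ω - φ ω * p (Z ω)) P := hφT.sub hφp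
    exact h.congr (Filter.Eventually.of_forall fun ω => (mul_sub _ _ _).symm)
  -- key orthogonality 1 : E[W · U] = 0
  have hWsm : StronglyMeasurable[MeasurableSpace.comap (fun ω => (T ω, Z ω)) inferInstance] W := by
    have hq : Measurable fun q : ℝ × 𝓩 =>
        (q.1 / pt q.2 - (1 - q.1) / (1 - pt q.2)) * (gt1 q.2 - gt0 q.2 - I) :=
      ((measurable_fst.div (hptm.comp measurable_snd)).sub
        ((measurable_const.sub measurable_fst).div
          (measurable_const.sub (hptm.comp measurable_snd)))).mul
        (((hgt1m.comp measurable_snd).sub (hgt0m.comp measurable_snd)).sub measurable_const)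
    have hWeq : W = fun ω => (fun q : ℝ × 𝓩 =>
        (q.1 / pt q.2 - (1 - q.1) / (1 - pt q.2)) * (gt1 q.2 - gt0 q.2 - I)) (T ω, Z ω) := by
      funext ω; simp only [hWdef, hHt, hsdef, hθt]
    rw [hWeq]
    exact (hq.comp (comap_measurable _)).stronglyMeasurable
  have keyA : ∫ ω, W ω * U ω ∂P = 0 := by
    have h1 : P[fun ω => W ω * U ω|MeasurableSpace.comap (fun ω => (T ω, Z ω)) inferInstance] =ᵐ[P] W * P[U|MeasurableSpace.comap (fun ω => (T ω, Z ω)) inferInstance] :=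
      condExp_mul_of_stronglyMeasurable_left hWsm (by exact hWU) hUint
    have h2 : (W * P[U|MeasurableSpace.comap (fun ω => (T ω, Z ω)) inferInstance] : Ω → ℝ) =ᵐ[P] 0 := by
      filter_upwards [hU] with ω h
      simp only [Pi.mul_apply, h, Pi.zero_apply, mul_zero]
    calc ∫ ω, W ω * U ω ∂P
        = ∫ ω, (P[fun ω => W ω * U ω|MeasurableSpace.comap (fun ω => (T ω, Z ω)) inferInstance]) ω ∂P := (integral_condExp hmTZ).symm
      _ = ∫ ω, (0 : Ω → ℝ) ω ∂P := integral_congr_ae (h1.trans h2)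
      _ = 0 := by simp
  -- key orthogonality 2 : E[φ · (T - p(Z))] = 0
  have hφsm : StronglyMeasurable[MeasurableSpace.comap Z inferInstance] φ := by
    have hq : Measurable fun z : 𝓩 =>
        ((g1 z - gt1 z) / pt z + (g0 z - gt0 z) / (1 - pt z)) * (gt1 z - gt0 z - I) :=
      (((hg1m.sub hgt1m).div hptm).add
        ((hg0m.sub hgt0m).div (measurable_const.sub hptm))).mul
        ((hgt1m.sub hgt0m).sub measurable_const)
    have hφeq : φ = fun ω => (fun z : 𝓩 =>
        ((g1 z - gt1 z) / pt z + (g0 z - gt0 z) / (1 - pt z)) * (gt1 z - gt0 z - I)) (Z ω) := by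
      funext ω; simp only [hφdef, hψdef, hsdef, hθt]
    rw [hφeq]
    exact (hq.comp (comap_measurable _)).stronglyMeasurable
  have keyB : ∫ ω, φ ω * (T ω - p (Z ω)) ∂P = 0 := by
    have h1 : P[fun ω => φ ω * T ω|MeasurableSpace.comap Z inferInstance] =ᵐ[P] φ * P[T|MeasurableSpace.comap Z inferInstance] :=
      condExp_mul_of_stronglyMeasurable_left hφsm (by exact hφT) hTint
    have h2 : ∫ ω, φ ω * T ω ∂P = ∫ ω, φ ω * p (Z ω) ∂P := by
      rw [← integral_condExp (μ := P) (f := fun ω => φ ω * T ω) hmZ]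
      refine integral_congr_ae (h1.trans ?_)
      filter_upwards [hprop] with ω h
      simp only [Pi.mul_apply]
      rw [← h]
    have h3 : (fun ω => φ ω * (T ω - p (Z ω))) =
        fun ω => φ ω * T ω - φ ω * p (Z ω) := funext fun ω => mul_sub _ _ _
    rw [h3, integral_sub hφT hφp, h2, sub_self]
  -- ∫ s = 0
  have hθt_int : Integrable θt P := hθt2.integrable one_le_two
  have hs_zero : ∫ ω, s ω ∂P = 0 := by
    simp only [hsdef]
    rw [integral_sub hθt_int (integrable_const I), integral_const]
    simp [hIdef]
  -- reduction of covariance with θt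
  have covred : ∀ f : Ω → ℝ, MemLp f 2 P → cov f θt = ∫ ω, f ω * s ω ∂P := by
    intro f hf
    have hfs : Integrable (fun ω => f ω * s ω) P := l2_mul_integrable' hf hs2
    have hconst : Integrable (fun ω => (∫ m, f m ∂P) * s ω) P := hs_int.const_mul _
    rw [hcov, ← hIdef]
    have hid : (fun ω => (f ω - ∫ m, f m ∂P) * (θt ω - I)) =
        fun ω => f ω * s ω - (∫ m, f m ∂P) * s ω := by
      funext ω; simp only [hsdef]; ring
    rw [hid, integral_sub hfs hconst, integral_const_mul, hs_zero, mul_zero, sub_zero]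
  -- remaining L² memberships
  have hc2 : MemLp c 2 P := by
    rw [hc]
    exact MemLp.add (hgt12.sub hgt02)
      (l2_bdd_mul' (hY2.sub hgtT2) hHtm.aestronglyMeasurable hHt_bd)
  have hb12 : MemLp bias1 2 P := by
    rw [hbias1]
    refine l2_bdd_mul' (C := 1/ε + 1) (hg12.sub hgt12)
      (((hpm.comp hZm).div (hptm.comp hZm)).sub measurable_const).aestronglyMeasurable ?_
    filter_upwards [hpbd, hptbd] with ω h1 h2
    refine (norm_sub_le _ _).trans (add_le_add ?_ ?_)
    · rw [Real.norm_eq_abs, abs_of_nonneg (div_nonneg h1.1.le (by linarith [h2.1]))]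
      exact div_le_div₀ (by norm_num) h1.2.le hε0 h2.1
    · simp
  have hb22 : MemLp bias2 2 P := by
    rw [hbias2]
    refine l2_bdd_mul' (C := 1 + 1/ε) (hg02.sub hgt02)
      (measurable_const.sub ((measurable_const.sub (hpm.comp hZm)).div
        (measurable_const.sub (hptm.comp hZm)))).aestronglyMeasurable ?_
    filter_upwards [hpbd, hptbd] with ω h1 h2
    have hε1pt : ε ≤ 1 - pt (Z ω) := by linarith [h2.2]
    refine (norm_sub_le _ _).trans (add_le_add ?_ ?_)
    · simp
    · rw [Real.norm_eq_abs, abs_of_nonneg (div_nonneg (by linarith [h1.2]) (by linarith))]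
      exact div_le_div₀ (by norm_num) (by linarith [h1.1]) hε0 hε1pt
  -- pointwise decomposition
  have key : ∀ ω, c ω * s ω = θ ω * s ω + bias1 ω * s ω + bias2 ω * s ω
      + W ω * U ω + φ ω * (T ω - p (Z ω)) := by
    intro ω
    rcases hTbin ω with h | h <;>
      simp only [hc, hθ, hbias1, hbias2, hHt, hsdef, hθt, hUdef, hWdef, hφdef, hψdef, h] <;>
      norm_num <;> ring
  -- integrabilities for splitting
  have hθs : Integrable (fun ω => θ ω * s ω) P := l2_mul_integrable' hθ2 hs2
  have hb1s : Integrable (fun ω => bias1 ω * s ω) P := l2_mul_integrable' hb12 hs2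
  have hb2s : Integrable (fun ω => bias2 ω * s ω) P := l2_mul_integrable' hb22 hs2
  have hsum1 : Integrable (fun ω => θ ω * s ω + bias1 ω * s ω) P := by exact hθs.add hb1s
  have hsum2 : Integrable (fun ω => θ ω * s ω + bias1 ω * s ω + bias2 ω * s ω) P := by
    exact hsum1.add hb2s
  have hsum3 : Integrable (fun ω => θ ω * s ω + bias1 ω * s ω + bias2 ω * s ω
      + W ω * U ω) P := by exact hsum2.add hWU
  calc cov c θt = ∫ ω, c ω * s ω ∂P := covred c hc2
    _ = ∫ ω, (θ ω * s ω + bias1 ω * s ω + bias2 ω * s ω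
        + W ω * U ω + φ ω * (T ω - p (Z ω))) ∂P :=
      integral_congr_ae (Filter.Eventually.of_forall key)
    _ = cov θ θt + cov bias1 θt + cov bias2 θt := by
      rw [integral_add hsum3 hφTp, integral_add hsum2 hWU, integral_add hsum1 hb2s,
        integral_add hθs hb1s, keyA, keyB, add_zero, add_zero,
        covred θ hθ2, covred bias1 hb12, covred bias2 hb22]
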